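/- Let S be a right regular band of groups that is a monoid, k a field, A = kS the monoid algebra, and e ∈ S an idempotent. Let M and N be right A-modules with N simple and N·e ≠ 0. Then for every n ≥ 0 there is an isomorphism Ext^n_A(M, N) ≅ Ext^n_{eAe}(M·e, N·e), where eAe = e·A·e and M·e, N·e are right eAe-modules via restriction. -/

import Mathlib

open CategoryTheory MulOpposite ModuleCat

/-- `spow s n` is the (n+1)-st power `s^(n+1)` of `s`, so that `spow s n` for `n : ℕ`
ranges over all positive powers of `s`. -/
def spow {S : Type*} [Semigroup S] (s : S) : ℕ → S
  | 0 => s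
  | n + 1 => spow s n * s

section Corner

variable (k : Type) [Field k] (A : Type) [Ring A] [Algebra k A]

/-- The `k`-subspace `εAε = {x : A | ε·x·ε = x}` of `A`. -/
def cornerSubmodule (ε : A) : Submodule k A where
  carrier := {x : A | ε * x * ε = x}
  add_mem' := by
    intro a b ha hb
    show ε * (a + b) * ε = a + b
    rw [mul_add, add_mul, ha, hb]
  zero_mem' := by
    show ε * 0 * ε = 0
    rw [mul_zero, zero_mul]
  smul_mem' := by
    intro c x hx
    show ε * (c • x) * ε = c • x
    rw [mul_smul_comm, smul_mul_assoc, hx]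

/-- The corner ring `εAε` at an idempotent `ε` of `A`,
a unital `k`-algebra with identity `ε`. -/
def Corner (ε : A) (_hε : ε * ε = ε) : Type := ↥(cornerSubmodule k A ε)

namespace Corner

variable {k A} {ε : A} {hε : ε * ε = ε}

instance : AddCommGroup (Corner k A ε hε) :=
  inferInstanceAs (AddCommGroup ↥(cornerSubmodule k A ε))

instance : Module k (Corner k A ε hε) :=
  inferInstanceAs (Module k ↥(cornerSubmodule k A ε))

/-- The underlying element of `A`. -/
def val (x : Corner k A ε hε) : A := (show ↥(cornerSubmodule k A ε) from x).1

theorem prop (x : Corner k A ε hε) : ε * val x * ε = val x :=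
  (show ↥(cornerSubmodule k A ε) from x).2

/-- Build an element of the corner. -/
def mk (x : A) (hx : ε * x * ε = x) : Corner k A ε hε :=
  show ↥(cornerSubmodule k A ε) from ⟨x, hx⟩

theorem val_injective : Function.Injective (val : Corner k A ε hε → A) := by
  intro a b h
  exact Subtype.ext h

theorem eps_mul (hε : ε * ε = ε) {x : A} (hx : ε * x * ε = x) : ε * x = x := by
  conv_lhs => rw [← hx]
  simp only [← mul_assoc]
  rw [hε, hx]

theorem mul_eps (hε : ε * ε = ε) {x : A} (hx : ε * x * ε = x) : x * ε = x := by
  conv_lhs => rw [← hx]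
  rw [mul_assoc, hε, hx]

theorem mem_mul (hε : ε * ε = ε) {x y : A} (hx : ε * x * ε = x) (hy : ε * y * ε = y) :
    ε * (x * y) * ε = x * y := by
  simp only [← mul_assoc]
  rw [eps_mul hε hx, mul_assoc, mul_eps hε hy]

noncomputable instance ring : Ring (Corner k A ε hε) :=
  { (inferInstanceAs (AddCommGroup (Corner k A ε hε)) : AddCommGroup (Corner k A ε hε)) with
    mul := fun x y => mk (val x * val y) (mem_mul hε x.prop y.prop)
    mul_assoc := fun a b c => val_injective (mul_assoc (val a) (val b) (val c))
    one := mk ε (by rw [hε, hε])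
    one_mul := fun a => val_injective (eps_mul hε a.prop)
    mul_one := fun a => val_injective (mul_eps hε a.prop)
    left_distrib := fun a b c => val_injective (mul_add (val a) (val b) (val c))
    right_distrib := fun a b c => val_injective (add_mul (val a) (val b) (val c))
    zero_mul := fun a => val_injective (zero_mul (val a))
    mul_zero := fun a => val_injective (mul_zero (val a)) }

theorem val_mul (x y : Corner k A ε hε) : val (x * y) = val x * val y := rfl
theorem val_one : val (1 : Corner k A ε hε) = ε := rfl

noncomputable instance algebra : Algebra k (Corner k A ε hε) :=
  Algebra.ofModule
    (fun c x y => val_injective (by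
      show (c • val x) * val y = c • (val x * val y)
      exact smul_mul_assoc c (val x) (val y)))
    (fun c x y => val_injective (by
      show val x * (c • val y) = c • (val x * val y)
      exact mul_smul_comm c (val x) (val y)))

end Corner

end Corner

section Me

variable {k : Type} [Field k] {S : Type} [Monoid S]

theorem singleIdem (k : Type) [Field k] {S : Type} [Monoid S] {e : S} (he : e * e = e) :
    MonoidAlgebra.single e (1 : k) * MonoidAlgebra.single e (1 : k)
      = MonoidAlgebra.single e (1 : k) := by
  rw [MonoidAlgebra.single_mul_single, he, one_mul]

/-- The subspace `M·e` of a right `kS`-module `M`. -/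
noncomputable def MeSub (k : Type) [Field k] {S : Type} [Monoid S] (e : S)
    (M : ModuleCat (MonoidAlgebra k S)ᵐᵒᵖ) : Submodule k M :=
  Submodule.span k {m : M | ∃ m' : M, m = op (MonoidAlgebra.single e (1 : k)) • m'}

theorem smul_comm_k (M : ModuleCat (MonoidAlgebra k S)ᵐᵒᵖ)
    (r : (MonoidAlgebra k S)ᵐᵒᵖ) (c : k) (v : M) : r • (c • v) = c • (r • v) := by
  rw [algebra_compatible_smul (MonoidAlgebra k S)ᵐᵒᵖ c v,
    algebra_compatible_smul (MonoidAlgebra k S)ᵐᵒᵖ c (r • v),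
    smul_smul, smul_smul, Algebra.commutes]

theorem e_smul_of_mem {e : S}
    (hε : MonoidAlgebra.single e (1 : k) * MonoidAlgebra.single e (1 : k)
      = MonoidAlgebra.single e (1 : k))
    (M : ModuleCat (MonoidAlgebra k S)ᵐᵒᵖ) {v : M} (hv : v ∈ MeSub k e M) :
    op (MonoidAlgebra.single e (1 : k)) • v = v := by
  induction hv using Submodule.span_induction with
  | mem w hw =>
      obtain ⟨m, rfl⟩ := hw
      rw [smul_smul, ← op_mul, hε]
  | zero => rw [smul_zero]
  | add a b _ _ ha hb => rw [smul_add, ha, hb]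
  | smul c a _ ha => rw [smul_comm_k, ha]

theorem smul_eps_mem {e : S} (a : MonoidAlgebra k S) (M : ModuleCat (MonoidAlgebra k S)ᵐᵒᵖ)
    (v : M) : op (a * MonoidAlgebra.single e (1 : k)) • v ∈ MeSub k e M := by
  apply Submodule.subset_span
  exact ⟨op a • v, by rw [smul_smul, ← op_mul]⟩

/-- Right multiplication by elements of the corner algebra `e·kS·e`, as a ring
homomorphism from the opposite of the corner algebra to the endomorphisms of `M·e`. -/
noncomputable def cornerHom (e : S)
    (hε : MonoidAlgebra.single e (1 : k) * MonoidAlgebra.single e (1 : k)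
      = MonoidAlgebra.single e (1 : k))
    (M : ModuleCat (MonoidAlgebra k S)ᵐᵒᵖ) :
    (Corner k (MonoidAlgebra k S) (MonoidAlgebra.single e (1 : k)) hε)ᵐᵒᵖ →+*
      Module.End k ↥(MeSub k e M) where
  toFun b :=
    { toFun := fun v => ⟨op (Corner.val (unop b)) • v.1, by
        rw [← Corner.mul_eps hε (unop b).prop]
        exact smul_eps_mem _ M v.1⟩
      map_add' := fun a b => Subtype.ext (by
        show op _ • ((a : M) + (b : M)) = op _ • (a : M) + op _ • (b : M)
        rw [smul_add])
      map_smul' := fun c a => Subtype.ext (by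
        show op _ • ((c • a : ↥(MeSub k e M)) : M) = c • (op _ • (a : M))
        rw [Submodule.coe_smul, smul_comm_k]) }
  map_one' := by
    ext v
    show op (Corner.val (1 : Corner k (MonoidAlgebra k S) _ _)) • (v : M) = (v : M)
    rw [Corner.val_one]
    exact e_smul_of_mem hε M v.2
  map_mul' x y := by
    ext v
    show op (Corner.val (unop y * unop x)) • (v : M)
      = op (Corner.val (unop x)) • (op (Corner.val (unop y)) • (v : M))
    rw [Corner.val_mul, smul_smul, ← op_mul]
  map_zero' := by
    ext v
    show op (Corner.val (0 : Corner k (MonoidAlgebra k S) _ _)) • (v : M) = 0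
    show op ((0 : MonoidAlgebra k S)) • (v : M) = 0
    rw [op_zero, zero_smul]
  map_add' x y := by
    ext v
    show op (Corner.val (unop x + unop y)) • (v : M)
      = op (Corner.val (unop x)) • (v : M) + op (Corner.val (unop y)) • (v : M)
    show op (Corner.val (unop x) + Corner.val (unop y)) • (v : M) = _
    rw [MulOpposite.op_add, add_smul]

/-- `M·e` is a right module over the corner algebra `e·kS·e`. -/
noncomputable instance cornerModule (e : S)
    (hε : MonoidAlgebra.single e (1 : k) * MonoidAlgebra.single e (1 : k)
      = MonoidAlgebra.single e (1 : k))
    (M : ModuleCat (MonoidAlgebra k S)ᵐᵒᵖ) :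
    Module (Corner k (MonoidAlgebra k S) (MonoidAlgebra.single e (1 : k)) hε)ᵐᵒᵖ
      ↥(MeSub k e M) :=
  Module.compHom _ (cornerHom e hε M)

end Me


section Stmt17Proof

open CategoryTheory MulOpposite

variable {k : Type} [Field k] {S : Type} [Monoid S]

theorem eps_mid (h2 : ∀ e : S, e * e = e → ∀ t : S, e * t * e = t * e)
    {e : S} (he : e * e = e) (a : MonoidAlgebra k S) :
    MonoidAlgebra.single e (1 : k) * a * MonoidAlgebra.single e (1 : k)
      = a * MonoidAlgebra.single e (1 : k) := by
  induction a using MonoidAlgebra.induction_linear with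
  | zero => rw [mul_zero, zero_mul]
  | add f g hf hg => rw [mul_add, add_mul, hf, hg, add_mul]
  | single t c =>
      show MonoidAlgebra.single e (1 : k) * MonoidAlgebra.single t c * _ = _
      rw [MonoidAlgebra.single_mul_single, MonoidAlgebra.single_mul_single,
        MonoidAlgebra.single_mul_single, one_mul, mul_one, h2 e he t]

theorem eps_op (h2 : ∀ e : S, e * e = e → ∀ t : S, e * t * e = t * e)
    {e : S} (he : e * e = e) (a : (MonoidAlgebra k S)ᵐᵒᵖ) :
    op (MonoidAlgebra.single e (1 : k)) * a
      = op (MonoidAlgebra.single e (1 : k)) * a * op (MonoidAlgebra.single e (1 : k)) := by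
  apply unop_injective
  simp only [unop_mul, unop_op]
  rw [← mul_assoc, eps_mid h2 he]

theorem star_prop (h2 : ∀ e : S, e * e = e → ∀ t : S, e * t * e = t * e)
    {e : S} (he : e * e = e) (N : ModuleCat (MonoidAlgebra k S)ᵐᵒᵖ)
    (hNsimple : IsSimpleModule (MonoidAlgebra k S)ᵐᵒᵖ N)
    (hNe : ∃ m : N, op (MonoidAlgebra.single e (1 : k)) • m ≠ 0) :
    ∀ v : N, op (MonoidAlgebra.single e (1 : k)) • v = v := by
  set ε : MonoidAlgebra k S := MonoidAlgebra.single e (1 : k) with hεdef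
  have hε : ε * ε = ε := singleIdem k he
  set T : Submodule (MonoidAlgebra k S)ᵐᵒᵖ N :=
    Submodule.span (MonoidAlgebra k S)ᵐᵒᵖ {v : N | ∃ m : N, v = m - op ε • m} with hT
  have hT0 : ∀ v ∈ T, op ε • v = (0 : N) := by
    intro v hv
    induction hv using Submodule.span_induction with
    | mem w hw =>
        obtain ⟨m, rfl⟩ := hw
        rw [smul_sub, smul_smul, ← op_mul, hε, sub_self]
    | zero => rw [smul_zero]
    | add a b _ _ ha hb => rw [smul_add, ha, hb, add_zero]
    | smul a v _ hv =>
        rw [smul_smul, eps_op h2 he, mul_smul, mul_smul, hv, smul_zero, smul_zero]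
  rcases IsSimpleOrder.eq_bot_or_eq_top T with hbot | htop
  · intro v
    have hv : v - op ε • v ∈ T := Submodule.subset_span ⟨v, rfl⟩
    rw [hbot, Submodule.mem_bot, sub_eq_zero] at hv
    exact hv.symm
  · exfalso
    obtain ⟨m, hm⟩ := hNe
    exact hm (hT0 m (htop ▸ Submodule.mem_top))

theorem mem_MeSub_iff {e : S} (he : e * e = e) (M : ModuleCat (MonoidAlgebra k S)ᵐᵒᵖ)
    (v : M) : v ∈ MeSub k e M ↔ op (MonoidAlgebra.single e (1 : k)) • v = v :=
  ⟨e_smul_of_mem (singleIdem k he) M, fun h => Submodule.subset_span ⟨v, h.symm⟩⟩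

end Stmt17Proof


section Stmt17Func

open CategoryTheory MulOpposite

variable {k : Type} [Field k] {S : Type} [Monoid S]

variable (h2 : ∀ e : S, e * e = e → ∀ t : S, e * t * e = t * e) {e : S} (he : e * e = e)

/-- The corner algebra. -/
noncomputable abbrev BCor (k : Type) [Field k] {S : Type} [Monoid S] {e : S}
    (he : e * e = e) :=
  Corner k (MonoidAlgebra k S) (MonoidAlgebra.single e (1 : k)) (singleIdem k he)

theorem smul_val (X : ModuleCat (MonoidAlgebra k S)ᵐᵒᵖ) (x : (BCor k he)ᵐᵒᵖ)
    (v : ↥(MeSub k e X)) :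
    ((x • v : ↥(MeSub k e X)) : X) = op (Corner.val (unop x)) • (v : X) := rfl

theorem val_smul_mem (X : ModuleCat (MonoidAlgebra k S)ᵐᵒᵖ) (x : BCor k he)
    {v : X} (hv : v ∈ MeSub k e X) : op (Corner.val x) • v ∈ MeSub k e X := by
  rw [mem_MeSub_iff he] at hv ⊢
  rw [smul_smul, ← op_mul, Corner.mul_eps (singleIdem k he) x.prop]

/-- The corner functor on objects. -/
noncomputable abbrev Fobj (X : ModuleCat (MonoidAlgebra k S)ᵐᵒᵖ) :
    ModuleCat (BCor k he)ᵐᵒᵖ :=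
  ModuleCat.of _ ↥(MeSub k e X)

/-- The corner functor on morphisms. -/
noncomputable def Fmap {X Y : ModuleCat (MonoidAlgebra k S)ᵐᵒᵖ} (f : X ⟶ Y) :
    Fobj he X ⟶ Fobj he Y := ModuleCat.ofHom {
  toFun v := ⟨f v.1, by
    rw [mem_MeSub_iff he, ← f.hom.map_smul, (mem_MeSub_iff he X v.1).1 v.2]⟩
  map_add' a b := Subtype.ext (f.hom.map_add a.1 b.1)
  map_smul' x v := Subtype.ext (f.hom.map_smul (op (Corner.val (unop x))) v.1) }

@[simp] theorem Fmap_val {X Y : ModuleCat (MonoidAlgebra k S)ᵐᵒᵖ} (f : X ⟶ Y)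
    (v : ↥(MeSub k e X)) : (Fmap he f v).1 = f v.1 := rfl

/-- The corner functor. -/
noncomputable def Ffun : ModuleCat (MonoidAlgebra k S)ᵐᵒᵖ ⥤ ModuleCat (BCor k he)ᵐᵒᵖ where
  obj := Fobj he
  map := Fmap he
  map_id X := ModuleCat.hom_ext (LinearMap.ext fun v => Subtype.ext rfl)
  map_comp f g := ModuleCat.hom_ext (LinearMap.ext fun v => Subtype.ext rfl)

instance Ffun_additive : (Ffun (k := k) he).Additive where
  map_add := ModuleCat.hom_ext (LinearMap.ext fun v => Subtype.ext rfl)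

/-- The projection of `kS` onto the corner algebra. -/
noncomputable def phi : MonoidAlgebra k S →+* BCor k he where
  toFun a := Corner.mk (a * MonoidAlgebra.single e (1 : k)) (by
    rw [← mul_assoc, eps_mid h2 he, mul_assoc, singleIdem k he])
  map_one' := Corner.val_injective (by
    show (1 : MonoidAlgebra k S) * _ = _
    rw [one_mul, Corner.val_one])
  map_mul' a b := Corner.val_injective (by
    show a * b * MonoidAlgebra.single e (1 : k)
      = a * MonoidAlgebra.single e (1 : k) * (b * MonoidAlgebra.single e (1 : k))
    rw [mul_assoc a (MonoidAlgebra.single e (1 : k)),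
      ← mul_assoc (MonoidAlgebra.single e (1 : k)) b, eps_mid h2 he b, ← mul_assoc])
  map_zero' := Corner.val_injective (zero_mul _)
  map_add' a b := Corner.val_injective (add_mul a b _)

theorem phi_val (x : BCor k he) : phi h2 he (Corner.val x) = x :=
  Corner.val_injective (Corner.mul_eps (singleIdem k he) x.prop)

theorem val_phi (a : MonoidAlgebra k S) :
    Corner.val (phi h2 he a) = a * MonoidAlgebra.single e (1 : k) := rfl

/-- Restriction of scalars along `phi`. -/
noncomputable def Gfun : ModuleCat (BCor k he)ᵐᵒᵖ ⥤ ModuleCat (MonoidAlgebra k S)ᵐᵒᵖ :=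
  ModuleCat.restrictScalars (RingHom.op (phi h2 he))

include h2 in
theorem Fobj_projective (X : ModuleCat (MonoidAlgebra k S)ᵐᵒᵖ) [Projective X] :
    Projective (Fobj he X) := by
  refine ⟨?_⟩
  intro E W f p hp
  -- the unit of the adjunction
  let u : X ⟶ (Gfun h2 he).obj (Fobj he X) :=
    ModuleCat.ofHom (X := X) (Y := (Gfun h2 he).obj (Fobj he X))
    { toFun := fun x => (⟨op (MonoidAlgebra.single e (1 : k)) • x,
        Submodule.subset_span ⟨x, rfl⟩⟩ : ↥(MeSub k e X))
      map_add' := fun x y => Subtype.ext (smul_add _ x y)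
      map_smul' := fun a x => Subtype.ext (by
        show op (MonoidAlgebra.single e (1 : k)) • (a • x)
          = op (Corner.val (phi h2 he (unop a))) • (op (MonoidAlgebra.single e (1 : k)) • x)
        induction a using MulOpposite.rec' with
        | h a =>
          simp only [smul_smul, val_phi, unop_op, ← op_mul]
          rw [← mul_assoc, eps_mid h2 he]) }
  have hp' : Function.Surjective p := (ModuleCat.epi_iff_surjective p).1 hp
  haveI : Epi ((Gfun h2 he).map p) := (ModuleCat.epi_iff_surjective _).2 hp'
  obtain ⟨h', hh'⟩ := Projective.factors (u ≫ (Gfun h2 he).map f) ((Gfun h2 he).map p)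
  let q : ↥(MeSub k e X) → E := fun v => h' v.1
  refine ⟨ModuleCat.ofHom
          { toFun := q
            map_add' := fun a b => h'.hom.map_add a.1 b.1
            map_smul' := fun b v => by
              refine (h'.hom.map_smul (op (Corner.val (unop b))) v.1).trans ?_
              show op (phi h2 he (Corner.val (unop b))) • q v = b • q v
              rw [phi_val, op_unop] }, ?_⟩
  apply ModuleCat.hom_ext
  apply LinearMap.ext
  intro v
  have h1 : p (q v) = f (u v.1) := DFunLike.congr_fun (congrArg ModuleCat.Hom.hom hh') v.1
  show p (q v) = f v
  rw [h1]
  exact congrArg f (Subtype.ext ((mem_MeSub_iff he X v.1).1 v.2))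

/-- The unit of the adjunction. -/
noncomputable def unitMap (X : ModuleCat (MonoidAlgebra k S)ᵐᵒᵖ) :
    X ⟶ (Gfun h2 he).obj (Fobj he X) :=
    ModuleCat.ofHom (X := X) (Y := (Gfun h2 he).obj (Fobj he X)) {
  toFun x := (⟨op (MonoidAlgebra.single e (1 : k)) • x,
      Submodule.subset_span ⟨x, rfl⟩⟩ : ↥(MeSub k e X))
  map_add' x y := Subtype.ext (smul_add _ x y)
  map_smul' a x := Subtype.ext (by
    show op (MonoidAlgebra.single e (1 : k)) • (a • x)
      = op (Corner.val (phi h2 he (unop a))) • (op (MonoidAlgebra.single e (1 : k)) • x)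
    induction a using MulOpposite.rec' with
    | h a =>
      simp only [smul_smul, val_phi, unop_op, ← op_mul]
      rw [← mul_assoc, eps_mid h2 he]) }

/-- The counit of the adjunction on a module on which `ε` acts as the identity. -/
noncomputable def counitMap (N : ModuleCat (MonoidAlgebra k S)ᵐᵒᵖ)
    (hstar : ∀ v : N, op (MonoidAlgebra.single e (1 : k)) • v = v) :
    (Gfun h2 he).obj (Fobj he N) ⟶ N :=
    ModuleCat.ofHom (X := (Gfun h2 he).obj (Fobj he N)) (Y := N) {
  toFun w := w.1
  map_add' _ _ := rfl
  map_smul' a w := by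
    induction a using MulOpposite.rec' with
    | h a =>
      show op (Corner.val (phi h2 he a)) • w.1 = op a • w.1
      rw [val_phi, op_mul, mul_smul]
      exact hstar _ }

/-- The hom-set equivalence. -/
noncomputable def homEquiv (N : ModuleCat (MonoidAlgebra k S)ᵐᵒᵖ)
    (hstar : ∀ v : N, op (MonoidAlgebra.single e (1 : k)) • v = v)
    (X : ModuleCat (MonoidAlgebra k S)ᵐᵒᵖ) :
    (X ⟶ N) ≃ₗ[k] (Fobj he X ⟶ Fobj he N) where
  toFun f := Fmap he f
  map_add' f g := ModuleCat.hom_ext (LinearMap.ext fun v => Subtype.ext rfl)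
  map_smul' c f := ModuleCat.hom_ext (LinearMap.ext fun v => Subtype.ext (by
    show algebraMap k (MonoidAlgebra k S)ᵐᵒᵖ c • f v.1
        = op (Corner.val (unop (algebraMap k (BCor k he)ᵐᵒᵖ c))) • f v.1
    have hw : op (MonoidAlgebra.single e (1 : k)) • f v.1 = f v.1 := by
      rw [← f.hom.map_smul, (mem_MeSub_iff he X v.1).1 v.2]
    have hval : Corner.val (algebraMap k (BCor k he) c)
        = c • (MonoidAlgebra.single e (1 : k)) := by
      rw [Algebra.algebraMap_eq_smul_one]
      show c • Corner.val (1 : BCor k he) = _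
      rw [Corner.val_one]
    simp only [MulOpposite.algebraMap_apply, unop_op]
    rw [hval, Algebra.smul_def, op_mul, mul_smul,
      smul_smul, ← op_mul, Algebra.commutes c, op_mul, mul_smul, hw]))
  invFun g := unitMap h2 he X ≫ (Gfun h2 he).map g ≫ counitMap h2 he N hstar
  left_inv f := ModuleCat.hom_ext (LinearMap.ext fun x => by
    show f (op (MonoidAlgebra.single e (1 : k)) • x) = f x
    rw [f.hom.map_smul]
    exact hstar _)
  right_inv g := ModuleCat.hom_ext (LinearMap.ext fun v => by
    have hv : unitMap h2 he X v.1 = v := Subtype.ext ((mem_MeSub_iff he X v.1).1 v.2)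
    exact Subtype.ext (congrArg (fun w => (g w).1) hv))

/-- The isomorphism of Hom complexes. -/
noncomputable def complexIso (N : ModuleCat (MonoidAlgebra k S)ᵐᵒᵖ)
    (hstar : ∀ v : N, op (MonoidAlgebra.single e (1 : k)) • v = v)
    (P : ChainComplex (ModuleCat (MonoidAlgebra k S)ᵐᵒᵖ) ℕ) :
    P.linearYonedaObj k N ≅
      ChainComplex.linearYonedaObj
        (((Ffun he).mapHomologicalComplex (ComplexShape.down ℕ)).obj P) k (Fobj he N) :=
  HomologicalComplex.Hom.isoOfComponents
    (fun i => (homEquiv h2 he N hstar (P.X i)).toModuleIso)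
    (fun i j _ => ModuleCat.hom_ext (LinearMap.ext fun f =>
      ModuleCat.hom_ext (LinearMap.ext fun v => Subtype.ext rfl)))

set_option maxHeartbeats 2000000 in
/-- The corner resolution. -/
noncomputable def Fres (M : ModuleCat (MonoidAlgebra k S)ᵐᵒᵖ) (P : ProjectiveResolution M) :
    ProjectiveResolution (Fobj he M) where
  complex := ((Ffun he).mapHomologicalComplex (ComplexShape.down ℕ)).obj P.complex
  projective n := Fobj_projective h2 he (P.complex.X n)
  π := (ChainComplex.toSingle₀Equiv _ _).symm
    ⟨(Ffun he).map (P.π.f 0 : P.complex.X 0 ⟶ M), by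
      rw [Functor.mapHomologicalComplex_obj_d]
      refine ((Ffun he).map_comp (P.complex.d 1 0) (P.π.f 0 : P.complex.X 0 ⟶ M)).symm.trans ?_
      rw [show P.complex.d 1 0 ≫ (P.π.f 0 : P.complex.X 0 ⟶ M) = 0 from
          P.complex_d_comp_π_f_zero]
      exact (Ffun he).map_zero _ _⟩
  quasiIso := ⟨fun i => by
    cases i with
    | zero =>
      rw [ChainComplex.quasiIsoAt₀_iff, ShortComplex.quasiIso_iff_of_zeros']
      · constructor
        · rw [ShortComplex.moduleCat_exact_iff]
          intro x hx
          have hP := (ShortComplex.moduleCat_exact_iff _).1 P.exact₀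
          have hx' : P.π.f 0 x.1 = 0 := congrArg Subtype.val hx
          obtain ⟨y, hy⟩ := hP x.1 hx'
          refine ⟨⟨op (MonoidAlgebra.single e (1 : k)) • y,
            Submodule.subset_span ⟨y, rfl⟩⟩, Subtype.ext ?_⟩
          show P.complex.d 1 0 (op (MonoidAlgebra.single e (1 : k)) • y) = x.1
          rw [LinearMap.map_smul, hy]
          exact (mem_MeSub_iff he _ x.1).1 x.2
        · rw [ModuleCat.epi_iff_surjective]
          intro v
          have hsur : Function.Surjective (P.π.f 0) :=
            (ModuleCat.epi_iff_surjective (P.π.f 0)).1 inferInstance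
          obtain ⟨y, hy⟩ := hsur (Subtype.val v)
          refine ⟨⟨op (MonoidAlgebra.single e (1 : k)) • y,
            Submodule.subset_span ⟨y, rfl⟩⟩, Subtype.ext ?_⟩
          show P.π.f 0 (op (MonoidAlgebra.single e (1 : k)) • y) = Subtype.val v
          rw [LinearMap.map_smul, hy]
          exact (mem_MeSub_iff he _ (Subtype.val v)).1 (Subtype.prop v)
      · show (((Ffun he).mapHomologicalComplex (ComplexShape.down ℕ)).obj P.complex).d 0 0 = 0
        apply HomologicalComplex.shape
        decide
      · rfl
      · rfl
    | succ m =>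
      rw [quasiIsoAt_iff_exactAt']
      · rw [HomologicalComplex.exactAt_iff' _ (m + 2) (m + 1) m (by simp) (by simp),
          ShortComplex.moduleCat_exact_iff]
        intro x hx
        have hP := (ShortComplex.moduleCat_exact_iff _).1
          ((HomologicalComplex.exactAt_iff' _ (m + 2) (m + 1) m (by simp) (by simp)).1
            (P.complex_exactAt_succ m))
        have hx' : P.complex.d (m + 1) m x.1 = 0 := congrArg Subtype.val hx
        obtain ⟨y, hy⟩ := hP x.1 hx'
        have hy' : P.complex.d (m + 2) (m + 1) y = x.1 := hy
        refine ⟨⟨op (MonoidAlgebra.single e (1 : k)) • y,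
          Submodule.subset_span ⟨y, rfl⟩⟩, Subtype.ext ?_⟩
        show P.complex.d (m + 2) (m + 1) (op (MonoidAlgebra.single e (1 : k)) • y) = x.1
        refine ((P.complex.d (m + 2) (m + 1)).hom.map_smul _ y).trans ?_
        rw [hy']
        exact (mem_MeSub_iff he _ x.1).1 x.2
      · exact ChainComplex.exactAt_succ_single_obj _ _⟩

end Stmt17Func

/-- let `S` be a right regular band of groups which is a monoid, `k` a
field, `A = kS`, `e ∈ S` an idempotent, and `M, N` right `A`-modules with `N` simple and
`N·e ≠ 0`.  Then for every `n ≥ 0` there is an isomorphism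
`Ext^n_A(M, N) ≅ Ext^n_{eAe}(M·e, N·e)`. -/
theorem stmt17 (k : Type) [Field k] (S : Type) [Monoid S] [Finite S]
    (h1 : ∀ s : S, ∀ n : ℕ, spow s n * spow s n = spow s n → spow s n * s = s)
    (h2 : ∀ e : S, e * e = e → ∀ t : S, e * t * e = t * e)
    (e : S) (he : e * e = e)
    (M N : ModuleCat (MonoidAlgebra k S)ᵐᵒᵖ)
    (hNsimple : IsSimpleModule (MonoidAlgebra k S)ᵐᵒᵖ N)
    (hNe : ∃ m : N, op (MonoidAlgebra.single e (1 : k)) • m ≠ 0)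
    (n : ℕ) :
    Nonempty
      ((((Ext k (ModuleCat (MonoidAlgebra k S)ᵐᵒᵖ) n).obj (Opposite.op M)).obj N) ≅
        (((Ext k (ModuleCat (Corner k (MonoidAlgebra k S)
              (MonoidAlgebra.single e (1 : k)) (singleIdem k he))ᵐᵒᵖ) n).obj
            (Opposite.op (ModuleCat.of (Corner k (MonoidAlgebra k S)
              (MonoidAlgebra.single e (1 : k)) (singleIdem k he))ᵐᵒᵖ ↥(MeSub k e M)))).obj
          (ModuleCat.of (Corner k (MonoidAlgebra k S)
            (MonoidAlgebra.single e (1 : k)) (singleIdem k he))ᵐᵒᵖ ↥(MeSub k e N)))) := by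
  have hstar := star_prop h2 he N hNsimple hNe
  let P : ProjectiveResolution M := ProjectiveResolution.of M
  let Q : ProjectiveResolution (Fobj he M) := Fres h2 he M P
  exact ⟨P.isoExt n N ≪≫
    (HomologicalComplex.homologyFunctor (ModuleCat k) (ComplexShape.up ℕ) n).mapIso
      (complexIso h2 he N hstar P.complex) ≪≫ (Q.isoExt n (Fobj he N)).symm⟩
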